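/- Let A and B be groups, let s₁,…,sₙ be a generating set of A and r₁,…,rₙ a generating set of B (n ≥ 1), with every sᵢ and every rᵢ nontrivial. Identify A and B with their images in the free product A ∗ B and set g := s₁r₁·s₂r₂ ⋯ sₙrₙ ∈ A ∗ B. If φ is an automorphism of A ∗ B satisfying φ(A) = A and φ(B) = B (as subgroups) and φ(g) = g, then φ is the identity automorphism. -/

import Mathlib

open Monoid

namespace AltAux

universe u v

variable {A : Type u} {B : Type v} [Group A] [Group B]

/-- The Bool-indexed family for the binary free product. -/
abbrev Fam (A : Type u) (B : Type v) : Bool → Type (max u v) :=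
  fun b => cond b (ULift.{max u v} B) (ULift.{max u v} A)

instance : ∀ b, Group (Fam A B b) := fun b => by cases b <;> (dsimp [Fam]; infer_instance)

/-- Interleaved list of letters. -/
def altList (l : List (A × B)) : List (Σ b, Fam A B b) :=
  l.flatMap fun p => [⟨false, ULift.up p.1⟩, ⟨true, ULift.up p.2⟩]

lemma altList_ne_one (l : List (A × B)) (h : ∀ p ∈ l, p.1 ≠ 1 ∧ p.2 ≠ 1) :
    ∀ x ∈ altList l, x.snd ≠ 1 := by
  induction l with
  | nil => simp [altList]
  | cons p l ih =>
    intro x hx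
    simp only [altList, List.flatMap_cons, List.mem_append, List.mem_cons,
      List.not_mem_nil, or_false] at hx
    rcases hx with (rfl | rfl) | hx
    · exact fun hc => (h p (List.mem_cons_self)).1 (congrArg ULift.down hc)
    · exact fun hc => (h p (List.mem_cons_self)).2 (congrArg ULift.down hc)
    · exact ih (fun q hq => h q (List.mem_cons_of_mem _ hq)) x hx

lemma altList_chain (l : List (A × B)) :
    (altList l).Chain' fun x y => x.fst ≠ y.fst := by
  induction l with
  | nil => simp [altList, List.Chain']
  | cons p l ih =>
    rcases l with _ | ⟨q, l⟩
    · simp [altList, List.Chain']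
    · simp only [altList, List.flatMap_cons, List.cons_append, List.nil_append] at ih ⊢
      exact List.IsChain.cons_cons (by simp) (List.IsChain.cons_cons (by simp) ih)

/-- The reduced word corresponding to an alternating list of nontrivial letters. -/
def altWord (l : List (A × B)) (h : ∀ p ∈ l, p.1 ≠ 1 ∧ p.2 ≠ 1) : CoprodI.Word (Fam A B) :=
  ⟨altList l, altList_ne_one l h, altList_chain l⟩

lemma altWord_prod (l : List (A × B)) (h : ∀ p ∈ l, p.1 ≠ 1 ∧ p.2 ≠ 1) :
    (altWord l h).prod
      = (l.map fun p => (CoprodI.of (M := Fam A B) (i := false) (ULift.up p.1))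
          * CoprodI.of (M := Fam A B) (i := true) (ULift.up p.2)).prod := by
  induction l with
  | nil => simp [altWord, CoprodI.Word.prod, altList]
  | cons p l ih =>
    simp only [CoprodI.Word.prod, altWord, altList, List.flatMap_cons, List.map_append,
      List.map_cons, List.prod_append, List.map_nil, List.prod_cons, List.prod_nil,
      mul_one] at ih ⊢
    rw [ih (fun q hq => h q (List.mem_cons_of_mem _ hq))]

lemma altList_inj : ∀ (l l' : List (A × B)), altList (A := A) (B := B) l = altList l' → l = l'
  | [], [], _ => rfl
  | [], _ :: _, h => by simp [altList] at h
  | _ :: _, [], h => by simp [altList] at h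
  | p :: l, q :: l', h => by
    simp only [altList, List.flatMap_cons, List.cons_append, List.nil_append,
      List.cons.injEq] at h
    obtain ⟨h1, h2, h3⟩ := h
    injection h1 with _ h1'
    injection h2 with _ h2'
    have e1 : p.1 = q.1 := congrArg ULift.down h1'
    have e2 : p.2 = q.2 := congrArg ULift.down h2'
    rw [altList_inj l l' h3, Prod.ext e1 e2]

/-- Key injectivity: alternating products of nontrivial letters in `CoprodI` are distinct. -/
lemma alt_prod_inj (l l' : List (A × B)) (h : ∀ p ∈ l, p.1 ≠ 1 ∧ p.2 ≠ 1)
    (h' : ∀ p ∈ l', p.1 ≠ 1 ∧ p.2 ≠ 1)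
    (heq : (l.map fun p => (CoprodI.of (M := Fam A B) (i := false) (ULift.up p.1))
          * CoprodI.of (M := Fam A B) (i := true) (ULift.up p.2)).prod
        = (l'.map fun p => (CoprodI.of (M := Fam A B) (i := false) (ULift.up p.1))
          * CoprodI.of (M := Fam A B) (i := true) (ULift.up p.2)).prod) :
    l = l' := by
  classical
  have hw : (altWord l h).prod = (altWord l' h').prod := by
    rw [altWord_prod, altWord_prod]; exact heq
  have : altWord l h = altWord l' h' :=
    (CoprodI.Word.equiv (M := Fam A B)).symm.injective hw
  exact altList_inj l l' (congrArg CoprodI.Word.toList this)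

/-- The embedding of the binary coproduct into an indexed coproduct. -/
noncomputable def toI : Coprod A B →* CoprodI (Fam A B) :=
  Coprod.lift
    ((CoprodI.of (M := Fam A B) (i := false)).comp
      (MulEquiv.ulift (α := A)).symm.toMonoidHom)
    ((CoprodI.of (M := Fam A B) (i := true)).comp
      (MulEquiv.ulift (α := B)).symm.toMonoidHom)

lemma coprod_alt_inj (l l' : List (A × B)) (h : ∀ p ∈ l, p.1 ≠ 1 ∧ p.2 ≠ 1)
    (h' : ∀ p ∈ l', p.1 ≠ 1 ∧ p.2 ≠ 1)
    (heq : (l.map fun p => Coprod.inl p.1 * Coprod.inr p.2).prod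
        = (l'.map fun p => Coprod.inl p.1 * Coprod.inr p.2).prod) :
    l = l' := by
  have key : ∀ m : List (A × B),
      toI ((m.map fun p => Coprod.inl p.1 * Coprod.inr p.2).prod)
        = (m.map fun p => (CoprodI.of (M := Fam A B) (i := false) (ULift.up p.1))
            * CoprodI.of (M := Fam A B) (i := true) (ULift.up p.2)).prod := by
    intro m
    rw [map_list_prod, List.map_map]
    refine congrArg List.prod (List.map_congr_left fun p _ => ?_)
    simp only [Function.comp, map_mul, toI, Coprod.lift_apply_inl, Coprod.lift_apply_inr,
      MonoidHom.comp_apply, MulEquiv.coe_toMonoidHom]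
    rfl
  refine alt_prod_inj l l' h h' ?_
  rw [← key, ← key, heq]

end AltAux


open Monoid in
/-- An automorphism of `A ∗ B` stabilizing `A` and `B` setwise and fixing the alternating
product `g = s₁r₁⋯sₙrₙ` of nontrivial generators is the identity. -/
theorem aut_fixing_factors_and_g_is_id {A B : Type*} [Group A] [Group B]
    (n : ℕ) (hn : 1 ≤ n) (s : Fin n → A) (r : Fin n → B)
    (hs1 : ∀ i, s i ≠ 1) (hr1 : ∀ i, r i ≠ 1)
    (hsgen : Subgroup.closure (Set.range s) = (⊤ : Subgroup A))
    (hrgen : Subgroup.closure (Set.range r) = (⊤ : Subgroup B))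
    (g : Monoid.Coprod A B)
    (hg : g = (List.ofFn fun i => Monoid.Coprod.inl (s i) * Monoid.Coprod.inr (r i)).prod)
    (φ : MulAut (Monoid.Coprod A B))
    (hA : Subgroup.map φ.toMonoidHom (Monoid.Coprod.inl : A →* Monoid.Coprod A B).range =
      (Monoid.Coprod.inl : A →* Monoid.Coprod A B).range)
    (hB : Subgroup.map φ.toMonoidHom (Monoid.Coprod.inr : B →* Monoid.Coprod A B).range =
      (Monoid.Coprod.inr : B →* Monoid.Coprod A B).range)
    (hfix : φ g = g) :
    φ = MulEquiv.refl (Monoid.Coprod A B) := by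
  classical
  have hAmem : ∀ i, φ (Coprod.inl (s i)) ∈ (Coprod.inl : A →* Coprod A B).range := by
    intro i
    rw [← hA]
    exact ⟨Coprod.inl (s i), ⟨s i, rfl⟩, rfl⟩
  have hBmem : ∀ i, φ (Coprod.inr (r i)) ∈ (Coprod.inr : B →* Coprod A B).range := by
    intro i
    rw [← hB]
    exact ⟨Coprod.inr (r i), ⟨r i, rfl⟩, rfl⟩
  choose a ha using hAmem
  choose b hb using hBmem
  have ha_ne : ∀ i, a i ≠ 1 := by
    intro i h
    apply hs1 i
    have h1 : φ (Monoid.Coprod.inl (s i)) = φ 1 := by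
      rw [← ha i, h, map_one, map_one]
    exact Monoid.Coprod.inl_injective (φ.injective h1 |>.trans (map_one _).symm)
  have hb_ne : ∀ i, b i ≠ 1 := by
    intro i h
    apply hr1 i
    have h1 : φ (Monoid.Coprod.inr (r i)) = φ 1 := by
      rw [← hb i, h, map_one, map_one]
    exact Monoid.Coprod.inr_injective (φ.injective h1 |>.trans (map_one _).symm)
  -- φ g as an alternating word
  have hφg : φ g =
      (List.ofFn fun i => Monoid.Coprod.inl (a i) * Monoid.Coprod.inr (b i)).prod := by
    rw [hg, map_list_prod, List.map_ofFn]
    refine congrArg List.prod (congrArg List.ofFn (funext fun i => ?_))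
    simp only [Function.comp_apply, map_mul]
    rw [← ha i, ← hb i]
  -- apply injectivity of alternating products
  have hl : (List.ofFn fun i => (a i, b i)) = (List.ofFn fun i => (s i, r i)) := by
    apply AltAux.coprod_alt_inj
    · intro p hp
      obtain ⟨i, rfl⟩ := List.mem_ofFn.mp hp
      exact ⟨ha_ne i, hb_ne i⟩
    · intro p hp
      obtain ⟨i, rfl⟩ := List.mem_ofFn.mp hp
      exact ⟨hs1 i, hr1 i⟩
    · rw [List.map_ofFn, List.map_ofFn]
      calc (List.ofFn ((fun p : A × B => Monoid.Coprod.inl p.1 * Monoid.Coprod.inr p.2) ∘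
              fun i => (a i, b i))).prod
          = φ g := by rw [hφg]; rfl
        _ = g := hfix
        _ = _ := by rw [hg]; rfl
  have hab : ∀ i, a i = s i ∧ b i = r i := by
    intro i
    have := congrFun (List.ofFn_inj.mp hl) i
    exact ⟨congrArg Prod.fst this, congrArg Prod.snd this⟩
  have hfixs : ∀ i, φ (Monoid.Coprod.inl (s i)) = Monoid.Coprod.inl (s i) := by
    intro i; rw [← ha i, (hab i).1]
  have hfixr : ∀ i, φ (Monoid.Coprod.inr (r i)) = Monoid.Coprod.inr (r i) := by
    intro i; rw [← hb i, (hab i).2]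
  have keyA : ∀ x : A, φ (Monoid.Coprod.inl x) = Monoid.Coprod.inl x := by
    intro x
    have hx : x ∈ Subgroup.closure (Set.range s) := hsgen ▸ Subgroup.mem_top x
    induction hx using Subgroup.closure_induction with
    | mem x hx => obtain ⟨i, rfl⟩ := hx; exact hfixs i
    | one => simp
    | mul x y _ _ hx hy => rw [map_mul, map_mul, hx, hy]
    | inv x _ hx => rw [map_inv, map_inv, hx]
  have keyB : ∀ x : B, φ (Monoid.Coprod.inr x) = Monoid.Coprod.inr x := by
    intro x
    have hx : x ∈ Subgroup.closure (Set.range r) := hrgen ▸ Subgroup.mem_top x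
    induction hx using Subgroup.closure_induction with
    | mem x hx => obtain ⟨i, rfl⟩ := hx; exact hfixr i
    | one => simp
    | mul x y _ _ hx hy => rw [map_mul, map_mul, hx, hy]
    | inv x _ hx => rw [map_inv, map_inv, hx]
  refine DFunLike.ext _ _ fun x => ?_
  induction x using Monoid.Coprod.induction_on with
  | inl m => exact keyA m
  | inr m => exact keyB m
  | mul x y hx hy => rw [map_mul, hx, hy]; rfl
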